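/- arXiv:2204.02570 — 2 statements merged into one kernel-verified Lean document; each statement's English description precedes it below -/
import Mathlib

section
/- Let μ be a probability measure on a finite set Ω, and let P be the transition matrix of an ergodic reversible Markov chain on Ω with stationary distribution μ. Suppose there exists α ∈ (0,1] such that for all probability measures ν on Ω, KL(νP ‖ μP) ≤ (1−α)·KL(ν ‖ μ). Then for every ε ∈ (0,1), the mixing time satisfies t_mix(P, ε) ≤ ⌈(1/α)·(log log(1/min_x μ(x)) + log(1/(2ε²)))⌉. -/
open Finset

variable {Ω : Type*}

/-- One step of the Markov chain `P` applied to a distribution `ν` (as a row vector). -/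
noncomputable def mcStep [Fintype Ω] (P : Ω → Ω → ℝ) (ν : Ω → ℝ) : Ω → ℝ :=
  fun y => ∑ x, ν x * P x y

/-- KL divergence between distributions on a finite set. -/
noncomputable def klDiv [Fintype Ω] (ν μ : Ω → ℝ) : ℝ :=
  ∑ x, ν x * Real.log (ν x / μ x)

/-- Total variation distance between distributions on a finite set. -/
noncomputable def tvDist [Fintype Ω] (ν μ : Ω → ℝ) : ℝ :=
  (1 / 2) * ∑ x, |ν x - μ x|

/-- Point mass at `x`. -/
noncomputable def pointMass [DecidableEq Ω] (x : Ω) : Ω → ℝ :=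
  fun y => if y = x then 1 else 0


section PinskerAux
open Real
open Real

noncomputable def psi (t : ℝ) : ℝ := Real.log t - (3/2) * ((t-1)*(t+5)) / (t+2)^2

noncomputable def phi (t : ℝ) : ℝ := t * Real.log t - t + 1 - (3/2) * (t-1)^2 / (t+2)

lemma psi_hasDeriv {t : ℝ} (ht : 0 < t) :
    HasDerivAt psi (1/t - 27/(t+2)^3) t := by
  have h2 : (0:ℝ) < (t + 2)^2 := by positivity
  have h1 : HasDerivAt Real.log (1/t) t := by
    simpa [one_div] using Real.hasDerivAt_log ht.ne'
  have hnum : HasDerivAt (fun t : ℝ => (t-1)*(t+5)) (2*t+4) t := by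
    have := ((hasDerivAt_id t).sub_const 1).mul ((hasDerivAt_id t).add_const 5)
    exact this.congr_deriv (by simp [id]; try ring)
  have hden : HasDerivAt (fun t : ℝ => (t+2)^2) (2*(t+2)) t := by
    have := ((hasDerivAt_id t).add_const 2).pow 2
    exact this.congr_deriv (by simp [id]; try ring)
  have hq : HasDerivAt (fun t : ℝ => ((t-1)*(t+5))/(t+2)^2)
      (((2*t+4)*(t+2)^2 - (t-1)*(t+5)*(2*(t+2)))/((t+2)^2)^2) t :=
    hnum.div hden h2.ne'
  have h := h1.sub (hq.const_mul (3/2 : ℝ))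
  have hfun : (fun x : ℝ => Real.log x - 3/2 * ((x-1)*(x+5)/(x+2)^2)) = psi := by
    funext x; unfold psi; ring
  rw [← hfun]
  refine h.congr_deriv ?_
  have h2' : t + 2 ≠ 0 := by positivity
  field_simp
  ring

lemma mono_aux {f f' : ℝ → ℝ} (hd : ∀ t, 0 < t → HasDerivAt f (f' t) t)
    {a b : ℝ} (ha : 0 < a) (hab : a ≤ b)
    (h0 : ∀ t, a < t → t < b → 0 ≤ f' t) :
    f a ≤ f b := by
  have hmono : MonotoneOn f (Set.Icc a b) := by
    apply monotoneOn_of_deriv_nonneg (convex_Icc a b)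
    · exact fun x hx => (hd x (lt_of_lt_of_le ha hx.1)).continuousAt.continuousWithinAt
    · intro x hx
      rw [interior_Icc] at hx
      exact (hd x (lt_trans ha hx.1)).differentiableAt.differentiableWithinAt
    · intro x hx
      rw [interior_Icc] at hx
      rw [(hd x (lt_trans ha hx.1)).deriv]
      exact h0 x hx.1 hx.2
  exact hmono (Set.left_mem_Icc.2 hab) (Set.right_mem_Icc.2 hab) hab

lemma psi_deriv_nonneg {t : ℝ} (ht : 0 < t) : 0 ≤ 1/t - 27/(t+2)^3 := by
  rw [sub_nonneg, div_le_div_iff₀ (by positivity) (by positivity)]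
  nlinarith [sq_nonneg (t-1), sq_nonneg t]

lemma psi_one : psi 1 = 0 := by unfold psi; norm_num

lemma psi_nonneg {t : ℝ} (ht : 1 ≤ t) : 0 ≤ psi t := by
  rw [← psi_one]
  exact mono_aux (fun s hs => psi_hasDeriv hs) one_pos ht
    (fun s hs _ => psi_deriv_nonneg (lt_trans one_pos hs))

lemma psi_nonpos {t : ℝ} (ht0 : 0 < t) (ht : t ≤ 1) : psi t ≤ 0 := by
  rw [← psi_one]
  exact mono_aux (fun s hs => psi_hasDeriv hs) ht0 ht
    (fun s hs _ => psi_deriv_nonneg (lt_trans ht0 hs))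

lemma phi_hasDeriv {t : ℝ} (ht : 0 < t) : HasDerivAt phi (psi t) t := by
  have h2 : (0:ℝ) < t + 2 := by positivity
  have h1 : HasDerivAt (fun x : ℝ => x * Real.log x) (Real.log t + 1) t := by
    have := (hasDerivAt_id t).mul (Real.hasDerivAt_log ht.ne')
    refine this.congr_deriv ?_
    field_simp
    simp only [id_eq]; ring
  have hnum : HasDerivAt (fun x : ℝ => (x-1)^2) (2*(t-1)) t := by
    have := ((hasDerivAt_id t).sub_const 1).pow 2
    exact this.congr_deriv (by simp [id]; try ring)
  have hden : HasDerivAt (fun x : ℝ => x + 2) 1 t := (hasDerivAt_id t).add_const 2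
  have hq : HasDerivAt (fun x : ℝ => (x-1)^2/(x+2))
      ((2*(t-1)*(t+2) - (t-1)^2*1)/(t+2)^2) t := hnum.div hden h2.ne'
  have h := ((h1.sub (hasDerivAt_id t)).add_const 1).sub (hq.const_mul (3/2 : ℝ))
  have hfun : (fun x : ℝ => (x * Real.log x - id x + 1) - 3/2 * ((x-1)^2/(x+2))) = phi := by
    funext x; unfold phi; simp [id]; ring
  rw [← hfun]
  refine h.congr_deriv ?_
  unfold psi
  field_simp
  ring

lemma phi_one : phi 1 = 0 := by unfold phi; norm_num

lemma phi_nonneg {t : ℝ} (ht : 0 < t) : 0 ≤ phi t := by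
  rcases le_total 1 t with h | h
  · rw [← phi_one]
    exact mono_aux (fun s hs => phi_hasDeriv hs) one_pos h
      (fun s hs _ => psi_nonneg hs.le)
  · have : -phi t ≤ -phi 1 := by
      refine mono_aux (f := fun x => -phi x) (f' := fun x => -psi x)
        (fun s hs => (phi_hasDeriv hs).neg) ht h
        (fun s hs hs' => neg_nonneg.2 (psi_nonpos (lt_trans ht hs) hs'.le))
    rw [phi_one] at this
    linarith

/-- The key scalar inequality behind Pinsker. -/
lemma key_ineq {a b : ℝ} (ha : 0 ≤ a) (hb : 0 < b) :
    3 * (a - b)^2 / (2*a + 4*b) ≤ a * Real.log (a/b) - a + b := by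
  rcases eq_or_lt_of_le ha with h | h
  · rw [← h]
    rw [div_le_iff₀ (by positivity)]
    nlinarith
  · have ht : 0 < a / b := by positivity
    have := phi_nonneg ht
    unfold phi at this
    have key : (3/2) * (a/b - 1)^2 / (a/b + 2) ≤ (a/b) * Real.log (a/b) - a/b + 1 := by
      linarith
    have hb' : b ≠ 0 := hb.ne'
    calc 3 * (a - b)^2 / (2*a + 4*b)
        = b * ((3/2) * (a/b - 1)^2 / (a/b + 2)) := by
          field_simp
          try ring
      _ ≤ b * ((a/b) * Real.log (a/b) - a/b + 1) := by
          apply mul_le_mul_of_nonneg_left key hb.le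
      _ = a * Real.log (a/b) - a + b := by field_simp; try ring

lemma pinsker [Fintype Ω] {ν μ : Ω → ℝ} (hν0 : ∀ x, 0 ≤ ν x) (hν1 : ∑ x, ν x = 1)
    (hμ0 : ∀ x, 0 < μ x) (hμ1 : ∑ x, μ x = 1) :
    tvDist ν μ ^ 2 ≤ klDiv ν μ / 2 := by
  set g : Ω → ℝ := fun x => (2 * ν x + 4 * μ x) / 3 with hg
  have hgpos : ∀ x ∈ Finset.univ, 0 < g x := fun x _ => by
    have := hν0 x; have := hμ0 x; positivity
  have hsumg : ∑ x, g x = 2 := by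
    simp only [hg]
    rw [← Finset.sum_div, Finset.sum_add_distrib, ← Finset.mul_sum, ← Finset.mul_sum,
      hν1, hμ1]
    norm_num
  have hCS := Finset.sq_sum_div_le_sum_sq_div Finset.univ (fun x => |ν x - μ x|) hgpos
  rw [hsumg] at hCS
  have hterm : ∀ x ∈ Finset.univ, |ν x - μ x| ^ 2 / g x ≤
      ν x * Real.log (ν x / μ x) - ν x + μ x := by
    intro x _
    have h := key_ineq (hν0 x) (hμ0 x)
    calc |ν x - μ x| ^ 2 / g x = 3 * (ν x - μ x)^2 / (2 * ν x + 4 * μ x) := by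
          rw [sq_abs, hg]
          rw [div_div_eq_mul_div, mul_comm]
      _ ≤ _ := h
  have hsum : ∑ x, |ν x - μ x| ^ 2 / g x ≤ klDiv ν μ := by
    calc ∑ x, |ν x - μ x| ^ 2 / g x
        ≤ ∑ x, (ν x * Real.log (ν x / μ x) - ν x + μ x) := Finset.sum_le_sum hterm
      _ = klDiv ν μ := by
          rw [Finset.sum_add_distrib, Finset.sum_sub_distrib, hν1, hμ1, klDiv]
          ring
  have : (∑ x, |ν x - μ x|) ^ 2 / 2 ≤ klDiv ν μ := le_trans hCS hsum
  rw [tvDist]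
  rw [mul_pow]
  nlinarith

end PinskerAux

theorem mixing_from_entropy_contraction
    [Fintype Ω] [DecidableEq Ω] [Nonempty Ω]
    (μ : Ω → ℝ) (P : Ω → Ω → ℝ)
    (hμpos : ∀ x, 0 < μ x) (hμ1 : ∑ x, μ x = 1)
    (hP0 : ∀ x y, 0 ≤ P x y) (hProw : ∀ x, ∑ y, P x y = 1)
    (hrev : ∀ x y, μ x * P x y = μ y * P y x)
    (hergodic : ∃ t : ℕ, ∀ x y, 0 < (mcStep P)^[t] (pointMass x) y)
    (α : ℝ) (hα0 : 0 < α) (hα1 : α ≤ 1)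
    (hcontr : ∀ ν : Ω → ℝ, (∀ x, 0 ≤ ν x) → ∑ x, ν x = 1 →
      klDiv (mcStep P ν) (mcStep P μ) ≤ (1 - α) * klDiv ν μ)
    (ε : ℝ) (hε0 : 0 < ε) (hε1 : ε < 1)
    (T : ℕ)
    (hT : T = ⌈(1 / α) * (Real.log (Real.log
        (1 / (Finset.univ.inf' Finset.univ_nonempty μ))) +
        Real.log (1 / (2 * ε ^ 2)))⌉₊) (x : Ω) :
    tvDist ((mcStep P)^[T] (pointMass x)) μ ≤ ε := by
  set μmin : ℝ := Finset.univ.inf' Finset.univ_nonempty μ with hμmin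
  have hμmin_le : ∀ y, μmin ≤ μ y := fun y =>
    Finset.inf'_le μ (Finset.mem_univ y)
  have hμmin_pos : 0 < μmin := by
    obtain ⟨y, -, hy⟩ := Finset.exists_mem_eq_inf' Finset.univ_nonempty μ
    rw [hμmin, hy]; exact hμpos y
  have hμmin_le_one : μmin ≤ 1 := by
    obtain ⟨y⟩ := ‹Nonempty Ω›
    refine le_trans (hμmin_le y) ?_
    calc μ y ≤ ∑ z, μ z := Finset.single_le_sum (fun z _ => (hμpos z).le) (Finset.mem_univ y)
      _ = 1 := hμ1
  set L : ℝ := Real.log (1 / μmin) with hL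
  have hL0 : 0 ≤ L := by
    rw [hL]
    apply Real.log_nonneg
    rw [le_div_iff₀ hμmin_pos]
    simpa using hμmin_le_one
  -- stationarity
  have hstat : mcStep P μ = μ := by
    funext y
    unfold mcStep
    calc ∑ z, μ z * P z y = ∑ z, μ y * P y z := by
          refine Finset.sum_congr rfl fun z _ => ?_
          rw [hrev z y]
      _ = μ y := by rw [← Finset.mul_sum, hProw, mul_one]
  -- the chain distributions
  set ν : ℕ → Ω → ℝ := fun t => (mcStep P)^[t] (pointMass x) with hν
  have hν_succ : ∀ t, ν (t+1) = mcStep P (ν t) := by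
    intro t; rw [hν]; simp [Function.iterate_succ_apply']
  have hprob : ∀ t, (∀ y, 0 ≤ ν t y) ∧ ∑ y, ν t y = 1 := by
    intro t
    induction t with
    | zero =>
      constructor
      · intro y; unfold ν; simp only [Function.iterate_zero, id]
        unfold pointMass; positivity
      · unfold ν; simp only [Function.iterate_zero, id]
        unfold pointMass; simp
    | succ t ih =>
      rw [hν_succ t]
      constructor
      · intro y
        unfold mcStep
        exact Finset.sum_nonneg fun z _ => mul_nonneg (ih.1 z) (hP0 z y)
      · unfold mcStep
        rw [Finset.sum_comm]
        calc ∑ z, ∑ y, ν t z * P z y = ∑ z, ν t z := by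
              refine Finset.sum_congr rfl fun z _ => ?_
              rw [← Finset.mul_sum, hProw, mul_one]
          _ = 1 := ih.2
  -- initial KL bound
  have hkl0 : klDiv (ν 0) μ ≤ L := by
    have h0 : ν 0 = pointMass x := by rw [hν]; simp
    rw [h0]
    unfold klDiv pointMass
    have heval : ∀ y ∈ Finset.univ, (if y = x then (1:ℝ) else 0) *
        Real.log ((if y = x then (1:ℝ) else 0) / μ y) =
        if y = x then Real.log (1 / μ x) else 0 := by
      intro y _
      by_cases h : y = x <;> simp [h]
    rw [Finset.sum_congr rfl heval, Finset.sum_ite_eq' Finset.univ x]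
    simp only [Finset.mem_univ, if_true]
    rw [hL]
    have h1 : 0 < 1 / μ x := by have := hμpos x; positivity
    apply Real.log_le_log h1
    apply div_le_div_of_nonneg_left one_pos.le hμmin_pos (hμmin_le x)
  -- contraction induction
  have hklt : ∀ t, klDiv (ν t) μ ≤ (1 - α)^t * L := by
    intro t
    induction t with
    | zero => simpa using hkl0
    | succ t ih =>
      rw [hν_succ t]
      calc klDiv (mcStep P (ν t)) μ = klDiv (mcStep P (ν t)) (mcStep P μ) := by rw [hstat]
        _ ≤ (1 - α) * klDiv (ν t) μ := hcontr (ν t) (hprob t).1 (hprob t).2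
        _ ≤ (1 - α) * ((1 - α)^t * L) := by
            apply mul_le_mul_of_nonneg_left ih (by linarith)
        _ = (1 - α)^(t+1) * L := by ring
  -- arithmetic: (1-α)^T * L ≤ 2 ε^2
  have hfinal : (1 - α)^T * L ≤ 2 * ε^2 := by
    rcases eq_or_lt_of_le hL0 with h | hLpos
    · rw [← h, mul_zero]; positivity
    · have hTle : Real.log L + Real.log (1 / (2 * ε^2)) ≤ α * T := by
        have h1 : (1/α) * (Real.log L + Real.log (1 / (2 * ε^2))) ≤ (T : ℝ) := by
          rw [hT]
          exact Nat.le_ceil _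
        calc Real.log L + Real.log (1 / (2 * ε^2))
            = α * ((1/α) * (Real.log L + Real.log (1 / (2 * ε^2)))) := by
              field_simp
          _ ≤ α * T := by apply mul_le_mul_of_nonneg_left h1 hα0.le
      have hexp : (1 - α)^T ≤ Real.exp (-(α * T)) := by
        calc (1 - α)^T ≤ (Real.exp (-α))^T := by
              apply pow_le_pow_left₀ (by linarith)
              linarith [Real.add_one_le_exp (-α)]
          _ = Real.exp (-(α * T)) := by
              rw [← Real.exp_nat_mul]; ring_nf
      have hexp2 : Real.exp (-(α * T)) ≤ 2 * ε^2 / L := by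
        rw [← Real.exp_log (show (0:ℝ) < 2 * ε^2 / L by positivity)]
        apply Real.exp_le_exp.2
        rw [Real.log_div (by positivity) hLpos.ne']
        have : Real.log (1 / (2 * ε^2)) = - Real.log (2 * ε^2) := by
          rw [one_div, Real.log_inv]
        linarith [hTle]
      calc (1 - α)^T * L ≤ Real.exp (-(α * T)) * L := by
            apply mul_le_mul_of_nonneg_right hexp hLpos.le
        _ ≤ (2 * ε^2 / L) * L := by
            apply mul_le_mul_of_nonneg_right hexp2 hLpos.le
        _ = 2 * ε^2 := by field_simp
  -- conclude via Pinsker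
  have hpin := pinsker (hprob T).1 (hprob T).2 hμpos hμ1
  have htv2 : tvDist (ν T) μ ^ 2 ≤ ε^2 := by
    calc tvDist (ν T) μ ^ 2 ≤ klDiv (ν T) μ / 2 := hpin
      _ ≤ ((1 - α)^T * L) / 2 := by linarith [hklt T]
      _ ≤ (2 * ε^2) / 2 := by linarith [hfinal]
      _ = ε^2 := by ring
  have htv0 : 0 ≤ tvDist (ν T) μ := by
    unfold tvDist
    apply mul_nonneg (by norm_num)
    exact Finset.sum_nonneg fun z _ => abs_nonneg _
  nlinarith
end

section
/- With the setup of the previous statement (μ negatively correlated on size-k subsets, p^max := max_i p_i < 1), conditioning on j ∉ F changes the marginal of i by at most a multiplicative factor: P_{F∼μ'}[i ∈ F] − P_{F∼μ}[i ∈ F] ≤ (p^max/(1 − p^max))·P_{F∼μ}[i ∈ F]. -/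
/-- Marginal of element `i` under a distribution on subsets of a finite type `V`. -/
noncomputable def marg {V : Type*} [Fintype V] [DecidableEq V]
    (μ : Finset V → ℝ) (i : V) : ℝ :=
  ∑ S ∈ Finset.univ.filter (fun S : Finset V => i ∈ S), μ S

theorem marginal_change_multiplicative_bound
    {V : Type*} [Fintype V] [DecidableEq V] (k : ℕ)
    (μ : Finset V → ℝ)
    (hμ0 : ∀ S, 0 ≤ μ S) (hμ1 : ∑ S : Finset V, μ S = 1)
    (hhom : ∀ S, μ S ≠ 0 → S.card = k)
    (hnegcor : ∀ i j : V, i ≠ j →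
      (∑ S ∈ Finset.univ.filter (fun S : Finset V => i ∈ S ∧ j ∈ S), μ S) ≤
        marg μ i * marg μ j)
    (pmax : ℝ) (hpmax : ∀ l, marg μ l ≤ pmax) (hpmax1 : pmax < 1)
    (i j : V) (hij : i ≠ j)
    (μ' : Finset V → ℝ)
    (hμ' : ∀ S : Finset V, μ' S = if j ∈ S then 0 else μ S / (1 - marg μ j)) :
    marg μ' i - marg μ i ≤ (pmax / (1 - pmax)) * marg μ i := by
  set pj := marg μ j with hpj
  set pi := marg μ i with hpi
  have hm : (0:ℝ) < 1 - pmax := by linarith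
  have h1 : (0:ℝ) < 1 - pj := by have := hpmax j; linarith
  set A := ∑ S ∈ Finset.univ.filter (fun S : Finset V => i ∈ S ∧ j ∈ S), μ S with hA
  set B := ∑ S ∈ Finset.univ.filter (fun S : Finset V => i ∈ S ∧ j ∉ S), μ S with hB
  have hA0 : 0 ≤ A := Finset.sum_nonneg fun S _ => hμ0 S
  have hB0 : 0 ≤ B := Finset.sum_nonneg fun S _ => hμ0 S
  have hpi0 : 0 ≤ pi := Finset.sum_nonneg fun S _ => hμ0 S
  have hpj0 : 0 ≤ pj := Finset.sum_nonneg fun S _ => hμ0 S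
  have hsum : pi = A + B := by
    rw [hpi, marg, hA, hB]
    rw [← Finset.sum_filter_add_sum_filter_not
      (Finset.univ.filter (fun S : Finset V => i ∈ S)) (fun S => j ∈ S)]
    simp [Finset.filter_filter]
  have hB' : marg μ' i = B / (1 - pj) := by
    rw [marg]
    simp only [hμ']
    rw [Finset.sum_ite, Finset.sum_const_zero, zero_add, ← Finset.sum_div]
    rw [hB, Finset.filter_filter]
  rw [hB']
  have hq : pj / (1 - pj) ≤ pmax / (1 - pmax) := by
    rw [div_le_div_iff₀ h1 hm]
    nlinarith [hpmax j]
  calc B / (1 - pj) - pi = (pi * pj - A) / (1 - pj) := by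
        have hBe : B = pi - A := by linarith
        rw [hBe]
        field_simp
        ring
    _ ≤ (pi * pj) / (1 - pj) := by gcongr; linarith
    _ = pi * (pj / (1 - pj)) := by ring
    _ ≤ pi * (pmax / (1 - pmax)) := mul_le_mul_of_nonneg_left hq hpi0
    _ = (pmax / (1 - pmax)) * pi := mul_comm _ _
end
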